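/- Let c_1,...,c_L ∈ [q]^n and let x_1,...,x_L ∈ (∂Δ)^n be their images under the coordinatewise embedding φ. Then for every probability distribution ω on [L], the weighted average radius admits the explicit formula rad_ω(x_1,...,x_L) = 1 − (1/n) ∑_{j=1}^n max_{x∈[q]} ∑_{i∈[L]: c_i(j)=x} ω(i). -/

import Mathlib

open Finset

/-- A probability distribution on a finite type. -/
def IsDist {α : Type*} [Fintype α] (P : α → ℝ) : Prop :=
  (∀ a, 0 ≤ P a) ∧ ∑ a, P a = 1

/-- The embedding `φ : [q] → ∂Δ` sending `x` to the standard basis vector `e_x`. -/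
noncomputable def phi (q : ℕ) (x : Fin q) : Fin q → ℝ := fun k => if k = x then 1 else 0

/-- `d(x,y) = (1/2) ∑_j ‖x(j) − y(j)‖₁` for blocks in `ℝ^q`. -/
noncomputable def dvec {q n : ℕ} (x y : Fin n → Fin q → ℝ) : ℝ :=
  (1 / 2) * ∑ j, ∑ k, |x j k - y j k|

/-- The weighted average radius `rad_ω(x₁,…,x_L) = (1/n) inf_{y∈Δⁿ} ∑_i ω(i) d(xᵢ,y)`. -/
noncomputable def radOmega {q n L : ℕ} (ω : Fin L → ℝ) (xs : Fin L → Fin n → Fin q → ℝ) : ℝ :=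
  (1 / (n : ℝ)) *
    sInf {r : ℝ | ∃ y : Fin n → Fin q → ℝ, (∀ j, IsDist (y j)) ∧ r = ∑ i, ω i * dvec (xs i) y}

/-- `d(φ(c), y) = ∑_j (1 - y_j(c_j))` for a distribution `y`. -/
lemma dvec_phi {q n : ℕ} (c : Fin n → Fin q) (y : Fin n → Fin q → ℝ)
    (hy : ∀ j, IsDist (y j)) :
    dvec (fun j => phi q (c j)) y = ∑ j, (1 - y j (c j)) := by
  unfold dvec
  rw [Finset.mul_sum]
  refine Finset.sum_congr rfl fun j _ => ?_
  have hy1 : y j (c j) ≤ 1 := by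
    calc y j (c j) ≤ ∑ k, y j k :=
          Finset.single_le_sum (fun k _ => (hy j).1 k) (Finset.mem_univ _)
      _ = 1 := (hy j).2
  have habs : ∀ k, |phi q (c j) k - y j k| =
      (if k = c j then 1 - 2 * y j k else 0) + y j k := by
    intro k
    unfold phi
    by_cases h : k = c j
    · rw [if_pos h, if_pos h, abs_of_nonneg (by subst h; linarith)]
      subst h; ring
    · rw [if_neg h, if_neg h, abs_of_nonpos (by have := (hy j).1 k; linarith)]
      ring
  simp only [habs]
  rw [Finset.sum_add_distrib, Finset.sum_ite_eq' Finset.univ (c j)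
    (fun k => 1 - 2 * y j k), if_pos (Finset.mem_univ _), (hy j).2]
  ring

theorem radOmega_explicit_formula (q n L : ℕ) (hq : 2 ≤ q) (hn : 1 ≤ n) (hL : 2 ≤ L)
    (cs : Fin L → Fin n → Fin q) (ω : Fin L → ℝ) (hω : IsDist ω) :
    radOmega ω (fun i j => phi q (cs i j)) =
      1 - (1 / (n : ℝ)) *
        ∑ j, ⨆ x : Fin q, ∑ i ∈ Finset.univ.filter (fun i => cs i j = x), ω i := by
  haveI : NeZero q := ⟨by omega⟩
  set w : Fin n → Fin q → ℝ :=
    fun j x => ∑ i ∈ Finset.univ.filter (fun i => cs i j = x), ω i with hw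
  have hw0 : ∀ j x, 0 ≤ w j x := fun j x => Finset.sum_nonneg fun i _ => hω.1 i
  have hne : (Finset.univ : Finset (Fin q)).Nonempty := Finset.univ_nonempty
  choose x0 _ hx0 using fun j => Finset.exists_max_image Finset.univ (w j) hne
  have hsup : ∀ j, (⨆ x : Fin q, w j x) = w j (x0 j) := by
    intro j
    refine le_antisymm (ciSup_le fun x => hx0 j x (Finset.mem_univ x)) ?_
    exact le_ciSup (Set.Finite.bddAbove (Set.finite_range _)) (x0 j)
  -- objective rewriting
  have hgrp : ∀ (j : Fin n) (y : Fin n → Fin q → ℝ),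
      ∑ i, ω i * y j (cs i j) = ∑ x, w j x * y j x := by
    intro j y
    rw [← Finset.sum_fiberwise Finset.univ (fun i => cs i j)
      (fun i => ω i * y j (cs i j))]
    refine Finset.sum_congr rfl fun x _ => ?_
    rw [hw, Finset.sum_mul]
    refine Finset.sum_congr rfl fun i hi => ?_
    rw [Finset.mem_filter] at hi
    rw [hi.2]
  have hobj : ∀ y : Fin n → Fin q → ℝ, (∀ j, IsDist (y j)) →
      ∑ i, ω i * dvec (fun j => phi q (cs i j)) y = ∑ j, (1 - ∑ x, w j x * y j x) := by
    intro y hy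
    have : ∀ i, ω i * dvec (fun j => phi q (cs i j)) y
        = ∑ j, ω i * (1 - y j (cs i j)) := by
      intro i
      rw [dvec_phi (fun j => cs i j) y hy, Finset.mul_sum]
    simp only [this]
    rw [Finset.sum_comm]
    refine Finset.sum_congr rfl fun j _ => ?_
    have : ∑ i, ω i * (1 - y j (cs i j)) = ∑ i, ω i - ∑ i, ω i * y j (cs i j) := by
      rw [← Finset.sum_sub_distrib]
      exact Finset.sum_congr rfl fun i _ => by ring
    rw [this, hω.2, hgrp j y]
  -- the infimum set
  set S : Set ℝ := {r : ℝ | ∃ y : Fin n → Fin q → ℝ,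
    (∀ j, IsDist (y j)) ∧ r = ∑ i, ω i * dvec (fun j => phi q (cs i j)) y} with hS
  -- witness
  have hphidist : ∀ a : Fin q, IsDist (phi q a) := by
    intro a
    constructor
    · intro k; unfold phi; positivity
    · unfold phi
      rw [Finset.sum_ite_eq' Finset.univ a (fun _ => (1 : ℝ)), if_pos (Finset.mem_univ _)]
  have hwitness : (∑ j, (1 - w j (x0 j))) ∈ S := by
    refine ⟨fun j => phi q (x0 j), fun j => hphidist (x0 j), ?_⟩
    rw [hobj _ (fun j => hphidist (x0 j))]
    refine (Finset.sum_congr rfl fun j _ => ?_).symm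
    congr 1
    unfold phi
    simp only [mul_ite, mul_one, mul_zero]
    rw [Finset.sum_ite_eq' Finset.univ (x0 j) (fun x => w j x), if_pos (Finset.mem_univ _)]
  -- lower bound
  have hlb : ∀ r ∈ S, (∑ j, (1 - w j (x0 j))) ≤ r := by
    rintro r ⟨y, hy, rfl⟩
    rw [hobj y hy]
    refine Finset.sum_le_sum fun j _ => ?_
    have : ∑ x, w j x * y j x ≤ w j (x0 j) := by
      calc ∑ x, w j x * y j x ≤ ∑ x, w j (x0 j) * y j x :=
            Finset.sum_le_sum fun x _ =>
              mul_le_mul_of_nonneg_right (hx0 j x (Finset.mem_univ x)) ((hy j).1 x)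
        _ = w j (x0 j) := by rw [← Finset.mul_sum, (hy j).2, mul_one]
    linarith
  have hInf : sInf S = ∑ j, (1 - w j (x0 j)) :=
    le_antisymm (csInf_le ⟨_, hlb⟩ hwitness) (le_csInf ⟨_, hwitness⟩ hlb)
  have hn' : (n : ℝ) ≠ 0 := Nat.cast_ne_zero.2 (by omega)
  show (1 / (n : ℝ)) * sInf S = _
  rw [hInf]
  simp only [show ∀ j, (⨆ x : Fin q, ∑ i ∈ Finset.univ.filter (fun i => cs i j = x), ω i) = w j (x0 j) from hsup]
  rw [Finset.sum_sub_distrib, Finset.sum_const, Finset.card_univ, Fintype.card_fin,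
    nsmul_eq_mul, mul_one, mul_sub, one_div_mul_cancel hn']
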